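/- Let w_0, …, w_n ∈ C^n have Property A and suppose every n-element subset of {w_0, …, w_n} is linearly independent over C. Write w_j = x_j + i y_j and let u_j = (x_j, y_j), v_j = (−y_j, x_j) ∈ R^{2n} be the associated real vectors. Then the 2n-dimensional Lebesgue volume of the convex hull of {u_0, …, u_n, v_0, …, v_n} equals (1/(2n)!) times the sum, over all pairs of index choices 0 ≤ j_1 < … < j_n ≤ n and 0 ≤ k_1 < … < k_n ≤ n, of |det(u_{j_1}, …, u_{j_n}, v_{k_1}, …, v_{k_n})|. -/

import Mathlib

open MeasureTheory Set Pointwise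
open scoped ENNReal


/-- The first associated real vector `u = (x₁, …, xₙ, y₁, …, yₙ) ∈ ℝ²ⁿ`
of `w = x + iy ∈ ℂⁿ`. -/
def assocU {n : ℕ} (w : Fin n → ℂ) : Fin n ⊕ Fin n → ℝ :=
  Sum.elim (fun i => (w i).re) (fun i => (w i).im)

/-- The second associated real vector `v = (-y₁, …, -yₙ, x₁, …, xₙ) ∈ ℝ²ⁿ`
of `w = x + iy ∈ ℂⁿ`. -/
def assocV {n : ℕ} (w : Fin n → ℂ) : Fin n ⊕ Fin n → ℝ :=
  Sum.elim (fun i => -(w i).im) (fun i => (w i).re)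

/-- `w₀, …, wₙ ∈ ℂⁿ` have Property A: there are strictly positive reals
`r₀, …, rₙ` with `r₀ + ⋯ + rₙ = 1` and `r₀w₀ + ⋯ + rₙwₙ = 0`. -/
def PropertyA {n : ℕ} (w : Fin (n + 1) → Fin n → ℂ) : Prop :=
  ∃ r : Fin (n + 1) → ℝ, (∀ j, 0 < r j) ∧ (∑ j, r j = 1) ∧
    (∑ j, (r j : ℂ) • w j = 0)


/-- The corner simplex. -/
def myCorner (ι : Type*) [Fintype ι] : Set (ι → ℝ) :=
  {x | (∀ i, 0 ≤ x i) ∧ ∑ i, x i ≤ 1}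

lemma myCorner_isCompact (ι : Type*) [Fintype ι] : IsCompact (myCorner ι) := by
  have hclosed : IsClosed (myCorner ι) := by
    have h1 : IsClosed {x : ι → ℝ | ∀ i, 0 ≤ x i} := by
      rw [Set.setOf_forall]
      exact isClosed_iInter fun i => isClosed_le continuous_const (continuous_apply i)
    have h2 : IsClosed {x : ι → ℝ | ∑ i, x i ≤ 1} :=
      isClosed_le (continuous_finset_sum _ fun i _ => continuous_apply i) continuous_const
    exact h1.inter h2
  refine IsCompact.of_isClosed_subset (isCompact_univ_pi fun i => isCompact_Icc (a := (0:ℝ)) (b := 1)) hclosed ?_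
  rintro x ⟨h0, h1⟩ i _
  refine ⟨h0 i, ?_⟩
  calc x i ≤ ∑ j, x j := Finset.single_le_sum (fun j _ => h0 j) (Finset.mem_univ i)
  _ ≤ 1 := h1

lemma myCorner_smul {ι : Type*} [Fintype ι] {t : ℝ} (ht : 0 ≤ t) :
    (t • myCorner ι : Set (ι → ℝ)) = {x : ι → ℝ | (∀ i, 0 ≤ x i) ∧ ∑ i, x i ≤ t} := by
  rcases eq_or_lt_of_le ht with h | h
  · subst h
    have h0 : (0:ι → ℝ) ∈ myCorner ι := ⟨fun i => le_rfl, by simp⟩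
    ext x
    simp only [Set.mem_smul_set, zero_smul, Set.mem_setOf_eq]
    constructor
    · rintro ⟨y, -, rfl⟩; exact ⟨fun i => le_rfl, by simp⟩
    · rintro ⟨hx0, hx1⟩
      have : x = 0 := by
        funext i
        have hle : x i ≤ 0 := by
          calc x i ≤ ∑ j, x j := Finset.single_le_sum (fun j _ => hx0 j) (Finset.mem_univ i)
          _ ≤ 0 := hx1
        exact le_antisymm hle (hx0 i)
      exact ⟨0, h0, this.symm⟩
  · ext x
    simp only [Set.mem_smul_set, Set.mem_setOf_eq, myCorner]
    constructor
    · rintro ⟨y, ⟨hy0, hy1⟩, rfl⟩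
      refine ⟨fun i => by simpa using mul_nonneg h.le (hy0 i), ?_⟩
      simp only [Pi.smul_apply, smul_eq_mul, ← Finset.mul_sum]
      nlinarith
    · rintro ⟨hx0, hx1⟩
      refine ⟨t⁻¹ • x, ⟨fun i => by simpa using mul_nonneg (inv_nonneg.2 h.le) (hx0 i), ?_⟩, ?_⟩
      · simp only [Pi.smul_apply, smul_eq_mul, ← Finset.mul_sum]
        rw [inv_mul_le_iff₀ h, mul_one]
        exact hx1
      · rw [smul_smul, mul_inv_cancel₀ h.ne', one_smul]

lemma myCorner_volume_fin (m : ℕ) :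
    volume (myCorner (Fin m)) = ENNReal.ofReal (1 / m.factorial) := by
  induction m with
  | zero =>
      have : myCorner (Fin 0) = Set.univ := by
        ext x; simp [myCorner]
      rw [this]
      have : (Set.univ : Set (Fin 0 → ℝ)) = Set.pi Set.univ (fun _ => Set.univ) := by simp
      rw [this, volume_pi_pi]
      simp
  | succ m ih =>
      set e := MeasurableEquiv.piFinSuccAbove (fun _ : Fin (m+1) => ℝ) 0 with he
      have hmp : MeasurePreserving e volume volume :=
        volume_preserving_piFinSuccAbove (fun _ : Fin (m+1) => ℝ) 0
      set B : Set (ℝ × (Fin m → ℝ)) :=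
        {p | 0 ≤ p.1 ∧ (∀ i, 0 ≤ p.2 i) ∧ p.1 + ∑ i, p.2 i ≤ 1} with hB
      have hBmeas : MeasurableSet B := by
        have h1 : IsClosed {p : ℝ × (Fin m → ℝ) | 0 ≤ p.1} :=
          isClosed_le continuous_const continuous_fst
        have h2 : IsClosed {p : ℝ × (Fin m → ℝ) | ∀ i, 0 ≤ p.2 i} := by
          rw [Set.setOf_forall]
          exact isClosed_iInter fun i =>
            isClosed_le continuous_const ((continuous_apply i).comp continuous_snd)
        have h3 : IsClosed {p : ℝ × (Fin m → ℝ) | p.1 + ∑ i, p.2 i ≤ 1} := by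
          apply isClosed_le _ continuous_const
          exact continuous_fst.add (continuous_finset_sum _ fun i _ => (continuous_apply i).comp continuous_snd)
        exact ((h1.inter (h2.inter h3)).measurableSet).congr rfl
      have hpre : myCorner (Fin (m+1)) = e ⁻¹' B := by
        ext x
        have hex : e x = (x 0, fun j => x ((0 : Fin (m+1)).succAbove j)) := by
          simp [he, MeasurableEquiv.piFinSuccAbove]
          rfl
        simp only [Set.mem_preimage, hex, hB, Set.mem_setOf_eq, myCorner]
        rw [Fin.forall_fin_succ, Fin.sum_univ_succ]
        simp [Fin.succAbove_zero, and_assoc]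
      have hvol : volume (myCorner (Fin (m+1))) = (volume : Measure (ℝ × (Fin m → ℝ))) B := by
        rw [hpre]
        exact hmp.measure_preimage hBmeas.nullMeasurableSet
      rw [hvol]
      have hprod : (volume : Measure (ℝ × (Fin m → ℝ))) = Measure.prod volume volume := rfl
      rw [hprod, Measure.prod_apply hBmeas]
      have hslice : ∀ t : ℝ, (volume (Prod.mk t ⁻¹' B) : ℝ≥0∞)
          = (Set.Icc (0:ℝ) 1).indicator (fun t => ENNReal.ofReal ((1-t)^m)) t
              * volume (myCorner (Fin m)) := by
        intro t
        by_cases ht : t ∈ Set.Icc (0:ℝ) 1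
        · have h01 : (0:ℝ) ≤ 1 - t := by linarith [ht.2]
          have : Prod.mk t ⁻¹' B = ((1 - t) • myCorner (Fin m) : Set (Fin m → ℝ)) := by
            rw [myCorner_smul h01]
            ext y
            simp only [Set.mem_preimage, hB, Set.mem_setOf_eq]
            constructor
            · rintro ⟨-, hy0, hy1⟩; exact ⟨hy0, by linarith⟩
            · rintro ⟨hy0, hy1⟩; exact ⟨ht.1, hy0, by linarith⟩
          rw [this, Measure.addHaar_smul, Set.indicator_of_mem ht]
          congr 1
          rw [Module.finrank_pi ℝ]
          simp [abs_of_nonneg (pow_nonneg h01 m)]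
        · have : Prod.mk t ⁻¹' B = (∅ : Set (Fin m → ℝ)) := by
            ext y
            simp only [Set.mem_preimage, hB, Set.mem_setOf_eq, Set.mem_empty_iff_false,
              iff_false, not_and]
            intro h1 h2
            simp only [Set.mem_Icc, not_and, not_le] at ht
            have hsum : 0 ≤ ∑ i, y i := Finset.sum_nonneg fun i _ => h2 i
            have := ht h1
            intro h3
            linarith
          rw [this, Set.indicator_of_notMem ht]
          simp
      calc ∫⁻ t, volume (Prod.mk t ⁻¹' B)
          = ∫⁻ t, (Set.Icc (0:ℝ) 1).indicator (fun t => ENNReal.ofReal ((1-t)^m)) t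
              * volume (myCorner (Fin m)) := by
            exact lintegral_congr hslice
        _ = (∫⁻ t, (Set.Icc (0:ℝ) 1).indicator (fun t => ENNReal.ofReal ((1-t)^m)) t)
              * volume (myCorner (Fin m)) := lintegral_mul_const _ (by
                exact (ENNReal.measurable_ofReal.comp (by fun_prop)).indicator measurableSet_Icc)
        _ = (∫⁻ t in Set.Icc (0:ℝ) 1, ENNReal.ofReal ((1-t)^m))
              * volume (myCorner (Fin m)) := by
            rw [lintegral_indicator measurableSet_Icc]
        _ = ENNReal.ofReal (1 / (m+1 : ℝ)) * ENNReal.ofReal (1 / m.factorial) := by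
            rw [ih]
            congr 1
            have hcont : Continuous (fun t : ℝ => (1-t)^m) := by fun_prop
            have hint : IntegrableOn (fun t : ℝ => (1-t)^m) (Set.Icc 0 1) :=
              hcont.integrableOn_Icc
            have hnn : 0 ≤ᵐ[volume.restrict (Set.Icc (0:ℝ) 1)] (fun t : ℝ => (1-t)^m) := by
              filter_upwards [ae_restrict_mem measurableSet_Icc] with t ht
              exact pow_nonneg (by linarith [ht.2]) m
            rw [← ofReal_integral_eq_lintegral_ofReal hint hnn]
            congr 1
            rw [MeasureTheory.integral_Icc_eq_integral_Ioc,
              ← intervalIntegral.integral_of_le (by norm_num : (0:ℝ) ≤ 1)]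
            rw [intervalIntegral.integral_comp_sub_left (fun x => x^m) 1]
            norm_num [integral_pow]
        _ = ENNReal.ofReal (1 / (m+1).factorial) := by
            rw [← ENNReal.ofReal_mul (by positivity)]
            congr 1
            rw [Nat.factorial_succ]
            push_cast
            field_simp

lemma myCorner_volume (ι : Type*) [Fintype ι] :
    volume (myCorner ι) = ENNReal.ofReal (1 / (Fintype.card ι).factorial) := by
  set e : Fin (Fintype.card ι) ≃ ι := (Fintype.equivFin ι).symm with he
  have hmp := volume_measurePreserving_piCongrLeft (fun _ : ι => ℝ) e
  have hmeas : MeasurableSet (myCorner ι) := (myCorner_isCompact ι).isClosed.measurableSet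
  have hpre : (MeasurableEquiv.piCongrLeft (fun _ : ι => ℝ) e) ⁻¹' (myCorner ι)
      = myCorner (Fin (Fintype.card ι)) := by
    ext x
    have hap : ∀ i, (MeasurableEquiv.piCongrLeft (fun _ : ι => ℝ) e) x i = x (e.symm i) := by
      intro i
      rw [MeasurableEquiv.coe_piCongrLeft, Equiv.piCongrLeft_apply_eq_cast]
      simp
    simp only [Set.mem_preimage, myCorner, Set.mem_setOf_eq]
    constructor
    · rintro ⟨h0, h1⟩
      refine ⟨fun j => by simpa [hap] using h0 (e j), ?_⟩
      calc ∑ j, x j = ∑ i, x (e.symm i) := (Fintype.sum_equiv e.symm _ _ fun i => rfl).symm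
        _ ≤ 1 := by simpa [hap] using h1
    · rintro ⟨h0, h1⟩
      refine ⟨fun i => by simpa [hap] using h0 (e.symm i), ?_⟩
      calc ∑ i, (MeasurableEquiv.piCongrLeft (fun _ : ι => ℝ) e) x i
          = ∑ i, x (e.symm i) := Finset.sum_congr rfl fun i _ => hap i
        _ = ∑ j, x j := Fintype.sum_equiv e.symm _ _ fun i => rfl
        _ ≤ 1 := h1
  have := hmp.measure_preimage hmeas.nullMeasurableSet
  rw [hpre] at this
  rw [← this, myCorner_volume_fin]

lemma volume_image_myCorner {ι : Type*} [Fintype ι] [DecidableEq ι] (f : ι → (ι → ℝ)) :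
    volume ((fun x : ι → ℝ => ∑ i, x i • f i) '' myCorner ι)
      = ENNReal.ofReal (|(Matrix.of fun i c => f c i).det| / (Fintype.card ι).factorial) := by
  have hfun : (fun x : ι → ℝ => ∑ i, x i • f i)
      = ⇑(Matrix.toLin' (Matrix.of fun i c => f c i)) := by
    funext x
    ext i
    rw [Matrix.toLin'_apply]
    simp [Matrix.mulVec, dotProduct, Finset.sum_apply, mul_comm]
  rw [hfun, Measure.addHaar_image_linearMap, LinearMap.det_toLin', myCorner_volume]
  rw [← ENNReal.ofReal_mul (abs_nonneg _)]
  congr 1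
  ring

lemma assocU_sum {n : ℕ} (w : Fin (n+1) → Fin n → ℂ) (c : Fin (n+1) → ℂ) :
    assocU (∑ j, c j • w j)
      = ∑ j, (c j).re • assocU (w j) + ∑ j, (c j).im • assocV (w j) := by
  funext i
  cases i with
  | inl i =>
      simp [assocU, assocV, Finset.sum_apply, Complex.re_sum, Complex.mul_re,
        Finset.sum_sub_distrib, mul_comm]
      ring
  | inr i =>
      simp [assocU, assocV, Finset.sum_apply, Complex.im_sum, Complex.mul_im,
        Finset.sum_add_distrib, mul_comm]
      ring

lemma assocU_eq_zero {n : ℕ} {z : Fin n → ℂ} (h : assocU z = 0) : z = 0 := by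
  funext i
  have h1 := congrFun h (Sum.inl i)
  have h2 := congrFun h (Sum.inr i)
  simp [assocU] at h1 h2
  exact Complex.ext h1 h2

lemma ker_lemma {n : ℕ} (w : Fin (n + 1) → Fin n → ℂ) (r : Fin (n+1) → ℝ)
    (hrpos : ∀ j, 0 < r j) (hr : ∑ j, (r j : ℂ) • w j = 0)
    (hind : ∀ s : Fin n → Fin (n + 1), StrictMono s →
      LinearIndependent ℂ (fun a => w (s a)))
    (c : Fin (n + 1) → ℂ) (hc : ∑ j, c j • w j = 0) :
    ∃ lam : ℂ, ∀ j, c j = lam * r j := by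
  set lam : ℂ := c 0 / (r 0 : ℂ) with hlam
  set d : Fin (n+1) → ℂ := fun j => c j - lam * (r j : ℂ) with hd
  have hr0 : (r 0 : ℂ) ≠ 0 := by
    exact_mod_cast (hrpos 0).ne'
  have hd0 : d 0 = 0 := by
    simp [hd, hlam, div_mul_cancel₀ _ hr0]
  have hdsum : ∑ j, d j • w j = 0 := by
    simp only [hd, sub_smul, Finset.sum_sub_distrib, hc]
    rw [zero_sub, neg_eq_zero]
    calc ∑ j, (lam * (r j : ℂ)) • w j = lam • ∑ j, (r j : ℂ) • w j := by
          rw [Finset.smul_sum]; simp [mul_smul]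
      _ = 0 := by rw [hr, smul_zero]
  have hli : LinearIndependent ℂ (fun a : Fin n => w (Fin.succ a)) :=
    hind Fin.succ Fin.strictMono_succ
  have hzero : ∀ m : Fin n, d (Fin.succ m) = 0 := by
    have := (Fintype.linearIndependent_iff.1 hli) (fun m => d (Fin.succ m)) ?_
    · exact this
    · rw [← hdsum, Fin.sum_univ_succ, hd0, zero_smul, zero_add]
  refine ⟨lam, fun j => ?_⟩
  have hdj : d j = 0 := by
    rcases Fin.eq_zero_or_eq_succ j with rfl | ⟨m, rfl⟩
    · exact hd0
    · exact hzero m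
  have := sub_eq_zero.1 hdj
  exact this

lemma real_ker_lemma {n : ℕ} (w : Fin (n + 1) → Fin n → ℂ) (r : Fin (n+1) → ℝ)
    (hrpos : ∀ j, 0 < r j) (hr : ∑ j, (r j : ℂ) • w j = 0)
    (hind : ∀ s : Fin n → Fin (n + 1), StrictMono s →
      LinearIndependent ℂ (fun a => w (s a)))
    (p q : Fin (n + 1) → ℝ)
    (h : ∑ j, p j • assocU (w j) + ∑ j, q j • assocV (w j) = 0) :
    ∃ α β : ℝ, (∀ j, p j = α * r j) ∧ (∀ j, q j = β * r j) := by
  set c : Fin (n+1) → ℂ := fun j => Complex.mk (p j) (q j) with hc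
  have hre : ∀ j, (c j).re = p j := fun j => rfl
  have him : ∀ j, (c j).im = q j := fun j => rfl
  have hz : ∑ j, c j • w j = 0 := by
    apply assocU_eq_zero
    rw [assocU_sum]
    simpa [hre, him] using h
  obtain ⟨lam, hlam⟩ := ker_lemma w r hrpos hr hind c hz
  refine ⟨lam.re, lam.im, fun j => ?_, fun j => ?_⟩
  · have := congrArg Complex.re (hlam j)
    simpa [hre] using this
  · have := congrArg Complex.im (hlam j)
    simpa [him] using this

lemma sum_r_assocU {n : ℕ} (w : Fin (n + 1) → Fin n → ℂ) (r : Fin (n+1) → ℝ)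
    (hr : ∑ j, (r j : ℂ) • w j = 0) :
    ∑ j, r j • assocU (w j) = 0 := by
  have := assocU_sum w (fun j => (r j : ℂ))
  rw [hr] at this
  rw [show assocU (0 : Fin n → ℂ) = 0 from by funext i; cases i <;> simp [assocU]] at this
  simpa using this.symm

lemma sum_r_assocV {n : ℕ} (w : Fin (n + 1) → Fin n → ℂ) (r : Fin (n+1) → ℝ)
    (hr : ∑ j, (r j : ℂ) • w j = 0) :
    ∑ j, r j • assocV (w j) = 0 := by
  have h2 : ∑ j, ((r j : ℂ) * Complex.I) • w j = 0 := by
    calc ∑ j, ((r j : ℂ) * Complex.I) • w j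
        = Complex.I • ∑ j, (r j : ℂ) • w j := by
          rw [Finset.smul_sum]
          exact Finset.sum_congr rfl fun j _ => by rw [smul_smul, mul_comm]
      _ = 0 := by rw [hr, smul_zero]
  have := assocU_sum w (fun j => (r j : ℂ) * Complex.I)
  rw [h2] at this
  rw [show assocU (0 : Fin n → ℂ) = 0 from by funext i; cases i <;> simp [assocU]] at this
  simpa using this.symm

lemma reduce_lemma {E : Type*} [AddCommGroup E] [Module ℝ E] {n : ℕ}
    (r : Fin (n+1) → ℝ) (hrpos : ∀ j, 0 < r j) (hr1 : ∑ j, r j = 1)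
    (vecs : Fin (n+1) → E) (h0 : ∑ j, r j • vecs j = 0)
    (s : Fin (n+1) → ℝ) (hs : ∀ j, 0 ≤ s j) :
    ∃ (ℓ : Fin (n+1)) (a : Fin (n+1) → ℝ) (c : ℝ), 0 ≤ c ∧ (∀ j, 0 ≤ a j) ∧ a ℓ = 0 ∧
      (∑ j, a j • vecs j = ∑ j, s j • vecs j) ∧ (∑ j, a j = ∑ j, s j - c) := by
  obtain ⟨ℓ, -, hmin⟩ := Finset.exists_min_image Finset.univ (fun j => s j / r j)
    ⟨0, Finset.mem_univ 0⟩
  set c : ℝ := s ℓ / r ℓ with hc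
  set a : Fin (n+1) → ℝ := fun j => s j - c * r j with ha
  have hcnn : 0 ≤ c := div_nonneg (hs ℓ) (hrpos ℓ).le
  refine ⟨ℓ, a, c, hcnn, ?_, ?_, ?_, ?_⟩
  · intro j
    have h1 : c ≤ s j / r j := hmin j (Finset.mem_univ j)
    have h2 : c * r j ≤ s j := (le_div_iff₀ (hrpos j)).1 h1
    simp [ha]
    linarith
  · simp [ha, hc, div_mul_cancel₀ _ (hrpos ℓ).ne']
  · simp only [ha, sub_smul, Finset.sum_sub_distrib]
    have : ∑ j, (c * r j) • vecs j = c • ∑ j, r j • vecs j := by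
      rw [Finset.smul_sum]
      exact Finset.sum_congr rfl fun j _ => (smul_smul c (r j) (vecs j)).symm
    rw [this, h0, smul_zero, sub_zero]
  · simp only [ha, Finset.sum_sub_distrib, ← Finset.mul_sum, hr1, mul_one]

lemma span_ne_top_lemma {n : ℕ} (r : Fin (n+1) → ℝ) (hrpos : ∀ j, 0 < r j)
    (A B : Fin (n+1) → (Fin n ⊕ Fin n → ℝ))
    (hB : ∑ j, r j • B j = 0)
    (ℓ ℓ' : Fin (n+1)) (hne : ℓ ≠ ℓ') :
    Submodule.span ℝ ((A '' {j | j ≠ ℓ ∧ j ≠ ℓ'}) ∪ Set.range B) ≠ ⊤ := by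
  have hn : 1 ≤ n := by
    rcases Nat.eq_zero_or_pos n with h | h
    · exfalso; subst h
      have h1 := ℓ.isLt
      have h2 := ℓ'.isLt
      exact hne (Fin.ext (by omega))
    · exact h
  set sF : Finset (Fin n ⊕ Fin n → ℝ) :=
    ((Finset.univ.erase ℓ).erase ℓ').image A ∪ (Finset.univ.erase 0).image B with hsF
  have hspan : Submodule.span ℝ ((A '' {j | j ≠ ℓ ∧ j ≠ ℓ'}) ∪ Set.range B)
      ≤ Submodule.span ℝ (sF : Set (Fin n ⊕ Fin n → ℝ)) := by
    rw [Submodule.span_le]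
    rintro y (⟨j, ⟨hj1, hj2⟩, rfl⟩ | ⟨j, rfl⟩)
    · rw [SetLike.mem_coe]
      apply Submodule.subset_span
      simp only [hsF, Finset.coe_union, Set.mem_union, Finset.coe_image, Set.mem_image]
      left
      exact ⟨j, by simp [Finset.mem_erase, hj1, hj2], rfl⟩
    · by_cases hj : j = 0
      · subst hj
        have key : r 0 • B 0 = -∑ m : Fin n, r (Fin.succ m) • B (Fin.succ m) := by
          have h := hB
          rw [Fin.sum_univ_succ] at h
          exact eq_neg_of_add_eq_zero_left h
        have hB0 : B 0 = (r 0)⁻¹ • (r 0 • B 0) := by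
          rw [smul_smul, inv_mul_cancel₀ (hrpos 0).ne', one_smul]
        rw [SetLike.mem_coe, hB0, key]
        apply Submodule.smul_mem
        apply Submodule.neg_mem
        apply Submodule.sum_mem
        intro m _
        apply Submodule.smul_mem
        apply Submodule.subset_span
        simp only [hsF, Finset.coe_union, Set.mem_union, Finset.coe_image, Set.mem_image]
        right
        exact ⟨Fin.succ m, by simp [Finset.mem_erase, Fin.succ_ne_zero], rfl⟩
      · rw [SetLike.mem_coe]
        apply Submodule.subset_span
        simp only [hsF, Finset.coe_union, Set.mem_union, Finset.coe_image, Set.mem_image]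
        right
        exact ⟨j, by simp [Finset.mem_erase, hj], rfl⟩
  intro htop
  have hle : (⊤ : Submodule ℝ (Fin n ⊕ Fin n → ℝ)) ≤ Submodule.span ℝ (sF : Set _) :=
    htop ▸ hspan
  have hrank1 : (Module.finrank ℝ (Fin n ⊕ Fin n → ℝ)) = 2 * n := by
    rw [Module.finrank_pi ℝ]
    simp [two_mul]
  have hrank2 : Module.finrank ℝ (Submodule.span ℝ (sF : Set (Fin n ⊕ Fin n → ℝ))) ≤ sF.card :=
    finrank_span_finset_le_card sF
  have hcard : sF.card ≤ (n - 1) + n := by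
    refine le_trans (Finset.card_union_le _ _) ?_
    have h1 : (((Finset.univ.erase ℓ).erase ℓ').image A).card ≤ n - 1 := by
      refine le_trans (Finset.card_image_le) ?_
      rw [Finset.card_erase_of_mem (by simp [Finset.mem_erase, Ne.symm hne]),
        Finset.card_erase_of_mem (by simp), Finset.card_univ, Fintype.card_fin]
      omega
    have h2 : ((Finset.univ.erase 0).image B).card ≤ n := by
      refine le_trans (Finset.card_image_le) ?_
      rw [Finset.card_erase_of_mem (by simp), Finset.card_univ, Fintype.card_fin]
      omega
    omega
  have : Module.finrank ℝ (Fin n ⊕ Fin n → ℝ)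
      ≤ Module.finrank ℝ (Submodule.span ℝ (sF : Set (Fin n ⊕ Fin n → ℝ))) := by
    calc Module.finrank ℝ (Fin n ⊕ Fin n → ℝ)
        = Module.finrank ℝ (⊤ : Submodule ℝ (Fin n ⊕ Fin n → ℝ)) := (finrank_top ℝ _).symm
      _ ≤ _ := Submodule.finrank_mono hle
  omega

def simplexPiece {M : Type*} [AddCommGroup M] [Module ℝ M] {n : ℕ}
    (U V : Fin (n+1) → M) (ℓ k : Fin (n+1)) : Set M :=
  (fun x : (Fin n ⊕ Fin n) → ℝ => ∑ i, x i •
    Sum.elim (fun a => U (ℓ.succAbove a)) (fun b => V (k.succAbove b)) i) ''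
      myCorner (Fin n ⊕ Fin n)

lemma mem_simplexPiece {M : Type*} [AddCommGroup M] [Module ℝ M] {n : ℕ}
    {U V : Fin (n+1) → M} {ℓ k : Fin (n+1)} {p : M} (hp : p ∈ simplexPiece U V ℓ k) :
    ∃ a b : Fin (n+1) → ℝ, (∀ j, 0 ≤ a j) ∧ (∀ j, 0 ≤ b j) ∧ a ℓ = 0 ∧ b k = 0 ∧
      p = ∑ j, a j • U j + ∑ j, b j • V j := by
  obtain ⟨x, ⟨hx0, -⟩, rfl⟩ := hp
  refine ⟨ℓ.insertNth 0 (fun m => x (Sum.inl m)), k.insertNth 0 (fun m => x (Sum.inr m)),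
    ?_, ?_, ?_, ?_, ?_⟩
  · intro j
    rcases eq_or_ne j ℓ with rfl | hj
    · rw [Fin.insertNth_apply_same]
    · obtain ⟨m, rfl⟩ := Fin.exists_succAbove_eq hj
      rw [Fin.insertNth_apply_succAbove]
      exact hx0 (Sum.inl m)
  · intro j
    rcases eq_or_ne j k with rfl | hj
    · rw [Fin.insertNth_apply_same]
    · obtain ⟨m, rfl⟩ := Fin.exists_succAbove_eq hj
      rw [Fin.insertNth_apply_succAbove]
      exact hx0 (Sum.inr m)
  · exact Fin.insertNth_apply_same ℓ 0 _
  · exact Fin.insertNth_apply_same k 0 _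
  · dsimp only
    rw [Fintype.sum_sum_type]
    have h1 : ∑ j : Fin (n+1), Fin.insertNth (α := fun _ => ℝ) ℓ (0:ℝ) (fun m => x (Sum.inl m)) j • U j
        = ∑ m : Fin n, x (Sum.inl m) • U (ℓ.succAbove m) := by
      rw [Fin.sum_univ_succAbove _ ℓ]
      simp
    have h2 : ∑ j : Fin (n+1), Fin.insertNth (α := fun _ => ℝ) k (0:ℝ) (fun m => x (Sum.inr m)) j • V j
        = ∑ m : Fin n, x (Sum.inr m) • V (k.succAbove m) := by
      rw [Fin.sum_univ_succAbove _ k]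
      simp
    rw [h1, h2]
    simp only [Sum.elim_inl, Sum.elim_inr]

lemma hull_eq_general {M : Type*} [AddCommGroup M] [Module ℝ M] {n : ℕ}
    (r : Fin (n+1) → ℝ) (hrpos : ∀ j, 0 < r j) (hr1 : ∑ j, r j = 1)
    (U V : Fin (n+1) → M) (hU0 : ∑ j, r j • U j = 0) (hV0 : ∑ j, r j • V j = 0) :
    convexHull ℝ (Set.range U ∪ Set.range V)
      = ⋃ ℓ : Fin (n+1), ⋃ k : Fin (n+1), simplexPiece U V ℓ k := by
  classical
  apply Set.Subset.antisymm
  · have hrange : (Set.range U ∪ Set.range V : Set M) = Set.range (Sum.elim U V) :=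
      (Sum.elim_range U V).symm
    rw [hrange]
    set T : ((Fin (n+1) ⊕ Fin (n+1)) → ℝ) →ₗ[ℝ] M :=
      { toFun := fun z => ∑ j, z j • Sum.elim U V j
        map_add' := fun z1 z2 => by
          simp [add_smul, Finset.sum_add_distrib]
        map_smul' := fun c z => by
          simp [Finset.smul_sum, smul_smul] } with hT
    have himg : convexHull ℝ (Set.range (Sum.elim U V))
        = ⇑T '' stdSimplex ℝ (Fin (n+1) ⊕ Fin (n+1)) := by
      rw [← convexHull_basis_eq_stdSimplex, T.image_convexHull, ← Set.range_comp]
      have hfun : Sum.elim U V = ⇑T ∘ (fun i j => if i = j then (1:ℝ) else 0) := by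
        funext j
        show Sum.elim U V j = ∑ j', (if j = j' then (1:ℝ) else 0) • Sum.elim U V j'
        simp
      rw [hfun]
    rw [himg]
    rintro p ⟨z, ⟨hz0, hz1⟩, rfl⟩
    obtain ⟨ℓ, a, c, hc, ha0, haℓ, haeq, hasum⟩ :=
      reduce_lemma r hrpos hr1 U hU0 (fun j => z (Sum.inl j)) (fun j => hz0 _)
    obtain ⟨k, b, d, hd, hb0, hbk, hbeq, hbsum⟩ :=
      reduce_lemma r hrpos hr1 V hV0 (fun j => z (Sum.inr j)) (fun j => hz0 _)
    rw [Set.mem_iUnion]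
    refine ⟨ℓ, Set.mem_iUnion.2 ⟨k, ?_⟩⟩
    refine ⟨Sum.elim (fun m => a (ℓ.succAbove m)) (fun m => b (k.succAbove m)), ⟨?_, ?_⟩, ?_⟩
    · rintro (m | m)
      · exact ha0 _
      · exact hb0 _
    · rw [Fintype.sum_sum_type]
      have h1 : ∑ m : Fin n, a (ℓ.succAbove m) = ∑ j, a j := by
        rw [Fin.sum_univ_succAbove a ℓ, haℓ, zero_add]
      have h2 : ∑ m : Fin n, b (k.succAbove m) = ∑ j, b j := by
        rw [Fin.sum_univ_succAbove b k, hbk, zero_add]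
      simp only [Sum.elim_inl, Sum.elim_inr]
      rw [h1, h2, hasum, hbsum]
      have hzsum : ∑ j, z (Sum.inl j) + ∑ j, z (Sum.inr j) = 1 := by
        rw [← Fintype.sum_sum_type]
        exact hz1
      linarith
    · have hTz : T z = ∑ j, z (Sum.inl j) • U j + ∑ j, z (Sum.inr j) • V j := by
        show ∑ j, z j • Sum.elim U V j = _
        rw [Fintype.sum_sum_type]
        rfl
      have h1 : ∑ m : Fin n, a (ℓ.succAbove m) • U (ℓ.succAbove m) = ∑ j, a j • U j := by
        rw [Fin.sum_univ_succAbove (fun j => a j • U j) ℓ, haℓ, zero_smul, zero_add]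
      have h2 : ∑ m : Fin n, b (k.succAbove m) • V (k.succAbove m) = ∑ j, b j • V j := by
        rw [Fin.sum_univ_succAbove (fun j => b j • V j) k, hbk, zero_smul, zero_add]
      dsimp only
      rw [Fintype.sum_sum_type]
      simp only [Sum.elim_inl, Sum.elim_inr]
      rw [h1, h2, haeq, hbeq, hTz]
  · refine Set.iUnion_subset fun ℓ => Set.iUnion_subset fun k => ?_
    rintro p ⟨x, ⟨hx0, hx1⟩, rfl⟩
    set G : (Fin n ⊕ Fin n) → M :=
      Sum.elim (fun a => U (ℓ.succAbove a)) (fun b => V (k.succAbove b)) with hG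
    set W : (Fin n ⊕ Fin n) ⊕ Fin (n+1) → ℝ :=
      Sum.elim x (fun j => (1 - ∑ i, x i) * r j) with hW
    set Z : (Fin n ⊕ Fin n) ⊕ Fin (n+1) → M := Sum.elim G U with hZ
    have hWsum : ∑ i, W i = 1 := by
      rw [Fintype.sum_sum_type]
      simp only [hW, Sum.elim_inl, Sum.elim_inr]
      rw [← Finset.mul_sum, hr1, mul_one]
      ring
    have hWnn : ∀ i ∈ (Finset.univ : Finset ((Fin n ⊕ Fin n) ⊕ Fin (n+1))), 0 ≤ W i := by
      rintro (i | j) -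
      · exact hx0 i
      · exact mul_nonneg (by linarith) (hrpos j).le
    have hZmem : ∀ i ∈ Finset.univ, Z i ∈ (Set.range U ∪ Set.range V : Set M) := by
      rintro (i | j) -
      · cases i with
        | inl a => exact Or.inl ⟨ℓ.succAbove a, rfl⟩
        | inr b => exact Or.inr ⟨k.succAbove b, rfl⟩
      · exact Or.inl ⟨j, rfl⟩
    have hmem := Finset.univ.centerMass_mem_convexHull hWnn (by rw [hWsum]; norm_num) hZmem
    rw [Finset.centerMass_eq_of_sum_1 _ _ hWsum] at hmem
    have hpt : ∑ i, W i • Z i = ∑ i, x i • G i := by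
      rw [Fintype.sum_sum_type]
      simp only [hW, hZ, Sum.elim_inl, Sum.elim_inr]
      have : ∑ j, ((1 - ∑ i, x i) * r j) • U j = (1 - ∑ i, x i) • ∑ j, r j • U j := by
        rw [Finset.smul_sum]
        exact Finset.sum_congr rfl fun j _ => (smul_smul _ _ _).symm
      rw [this, hU0, smul_zero, add_zero]
    rwa [hpt] at hmem

lemma inter_subset_span {M : Type*} [AddCommGroup M] [Module ℝ M] {n : ℕ}
    (r : Fin (n+1) → ℝ) (hrpos : ∀ j, 0 < r j)
    (U V : Fin (n+1) → M)
    (hker : ∀ p q : Fin (n+1) → ℝ, ∑ j, p j • U j + ∑ j, q j • V j = 0 →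
      ∃ α β : ℝ, (∀ j, p j = α * r j) ∧ (∀ j, q j = β * r j))
    (ℓ k ℓ' k' : Fin (n+1)) (hll : ℓ ≠ ℓ') :
    simplexPiece U V ℓ k ∩ simplexPiece U V ℓ' k'
      ⊆ (Submodule.span ℝ ((U '' {j | j ≠ ℓ ∧ j ≠ ℓ'}) ∪ Set.range V) : Set M) := by
  rintro p ⟨hp1, hp2⟩
  obtain ⟨a, b, ha0, hb0, haℓ, hbk, hpe⟩ := mem_simplexPiece hp1
  obtain ⟨a', b', ha0', hb0', haℓ', hbk', hpe'⟩ := mem_simplexPiece hp2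
  have hdiff : ∑ j, (a j - a' j) • U j + ∑ j, (b j - b' j) • V j = 0 := by
    have h := hpe.symm.trans hpe'
    simp only [sub_smul, Finset.sum_sub_distrib]
    rw [sub_add_sub_comm, sub_eq_zero]
    exact h
  obtain ⟨α, β, hα, hβ⟩ := hker _ _ hdiff
  have hα0 : α = 0 := by
    have h1 := hα ℓ
    rw [haℓ] at h1
    have h2 := hα ℓ'
    rw [haℓ'] at h2
    have hposℓ := hrpos ℓ
    have hposℓ' := hrpos ℓ'
    have hb1 := ha0' ℓ
    have hb2 := ha0 ℓ'
    nlinarith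
  have haℓ'2 : a ℓ' = 0 := by
    have h2 := hα ℓ'
    rw [haℓ', hα0] at h2
    linarith
  rw [SetLike.mem_coe, hpe]
  apply Submodule.add_mem
  · apply Submodule.sum_mem
    intro j _
    by_cases hjl : j = ℓ
    · subst hjl
      rw [haℓ, zero_smul]
      exact Submodule.zero_mem _
    by_cases hjl' : j = ℓ'
    · subst hjl'
      rw [haℓ'2, zero_smul]
      exact Submodule.zero_mem _
    · exact Submodule.smul_mem _ _ (Submodule.subset_span (Or.inl ⟨j, ⟨hjl, hjl'⟩, rfl⟩))
  · apply Submodule.sum_mem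
    intro j _
    exact Submodule.smul_mem _ _ (Submodule.subset_span (Or.inr ⟨j, rfl⟩))

lemma simplexPiece_swap_le {M : Type*} [AddCommGroup M] [Module ℝ M] {n : ℕ}
    (U V : Fin (n+1) → M) (ℓ k : Fin (n+1)) :
    simplexPiece V U k ℓ ⊆ simplexPiece U V ℓ k := by
  rintro p ⟨x, ⟨hx0, hx1⟩, rfl⟩
  refine ⟨Sum.elim (fun m => x (Sum.inr m)) (fun m => x (Sum.inl m)), ⟨?_, ?_⟩, ?_⟩
  · rintro (m | m)
    · exact hx0 _
    · exact hx0 _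
  · rw [Fintype.sum_sum_type] at hx1 ⊢
    simp only [Sum.elim_inl, Sum.elim_inr]
    rw [add_comm]
    exact hx1
  · dsimp only
    rw [Fintype.sum_sum_type, Fintype.sum_sum_type]
    simp only [Sum.elim_inl, Sum.elim_inr]
    rw [add_comm]

lemma simplexPiece_swap {M : Type*} [AddCommGroup M] [Module ℝ M] {n : ℕ}
    (U V : Fin (n+1) → M) (ℓ k : Fin (n+1)) :
    simplexPiece V U k ℓ = simplexPiece U V ℓ k :=
  Set.Subset.antisymm (simplexPiece_swap_le U V ℓ k) (simplexPiece_swap_le V U k ℓ)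


/-- If `w₀, …, wₙ ∈ ℂⁿ` have Property A and every `n` of them are linearly independent
over `ℂ`, then the `2n`-dimensional Lebesgue volume of the convex hull of the associated
real vectors `u₀, …, uₙ, v₀, …, vₙ` equals `1/(2n)!` times the sum, over all pairs of
strictly increasing index choices (equivalently, over the pairs `(ℓ, k)` of omitted
indices, via `Fin.succAbove`), of the `2n × 2n` determinant absolute values. -/
theorem stmt9 (n : ℕ) (w : Fin (n + 1) → Fin n → ℂ) (hA : PropertyA w)
    (hind : ∀ s : Fin n → Fin (n + 1), StrictMono s →
      LinearIndependent ℂ (fun a => w (s a))) :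
    MeasureTheory.volume
      (convexHull ℝ
        (((Set.range fun j => assocU (w j)) ∪ (Set.range fun j => assocV (w j)))
          : Set (Fin n ⊕ Fin n → ℝ))) =
    ENNReal.ofReal ((1 / ((2 * n).factorial : ℝ)) *
      ∑ ℓ : Fin (n + 1), ∑ k : Fin (n + 1),
        |Matrix.det (Matrix.of fun (i c : Fin n ⊕ Fin n) =>
          Sum.elim (fun a => assocU (w (ℓ.succAbove a)) i)
            (fun b => assocV (w (k.succAbove b)) i) c)|) := by
  classical
  obtain ⟨r, hrpos, hr1, hrw⟩ := hA
  have hu0 : ∑ j, r j • assocU (w j) = 0 := sum_r_assocU w r hrw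
  have hv0 : ∑ j, r j • assocV (w j) = 0 := sum_r_assocV w r hrw
  have hker : ∀ p q : Fin (n+1) → ℝ,
      ∑ j, p j • assocU (w j) + ∑ j, q j • assocV (w j) = 0 →
      ∃ α β : ℝ, (∀ j, p j = α * r j) ∧ (∀ j, q j = β * r j) :=
    fun p q h => real_ker_lemma w r hrpos hrw hind p q h
  have hker' : ∀ p q : Fin (n+1) → ℝ,
      ∑ j, p j • assocV (w j) + ∑ j, q j • assocU (w j) = 0 →
      ∃ α β : ℝ, (∀ j, p j = α * r j) ∧ (∀ j, q j = β * r j) := by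
    intro p q h
    obtain ⟨α, β, h1, h2⟩ := hker q p (by rw [add_comm]; exact h)
    exact ⟨β, α, h2, h1⟩
  rw [hull_eq_general r hrpos hr1 (fun j => assocU (w j)) (fun j => assocV (w j)) hu0 hv0]
  have hUeq : (⋃ ℓ : Fin (n+1), ⋃ k : Fin (n+1),
        simplexPiece (fun j => assocU (w j)) (fun j => assocV (w j)) ℓ k)
      = ⋃ pr ∈ (Finset.univ : Finset (Fin (n+1) × Fin (n+1))),
          simplexPiece (fun j => assocU (w j)) (fun j => assocV (w j)) pr.1 pr.2 := by
    ext p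
    simp only [Set.mem_iUnion, Finset.mem_univ, exists_prop, true_and, Prod.exists]
  rw [hUeq]
  have hcomp : ∀ ℓ k : Fin (n+1),
      IsCompact (simplexPiece (fun j => assocU (w j)) (fun j => assocV (w j)) ℓ k) := by
    intro ℓ k
    exact (myCorner_isCompact _).image
      (continuous_finset_sum _ fun i _ => (continuous_apply i).smul continuous_const)
  rw [measure_biUnion_finset₀ ?_ ?_]
  rotate_left
  · intro pr _ qr _ hne
    have hcase : pr.1 ≠ qr.1 ∨ pr.2 ≠ qr.2 := by
      by_contra h
      push_neg at h
      exact hne (Prod.ext h.1 h.2)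
    show volume (_ ∩ _) = 0
    dsimp only
    rcases hcase with h | h
    · exact measure_mono_null
        (inter_subset_span r hrpos _ _ hker pr.1 pr.2 qr.1 qr.2 h)
        (Measure.addHaar_submodule volume _
          (span_ne_top_lemma r hrpos (fun j => assocU (w j)) (fun j => assocV (w j))
            hv0 pr.1 qr.1 h))
    · rw [← simplexPiece_swap (fun j => assocU (w j)) (fun j => assocV (w j)) pr.1 pr.2,
        ← simplexPiece_swap (fun j => assocU (w j)) (fun j => assocV (w j)) qr.1 qr.2]
      exact measure_mono_null
        (inter_subset_span r hrpos _ _ hker' pr.2 pr.1 qr.2 qr.1 h)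
        (Measure.addHaar_submodule volume _
          (span_ne_top_lemma r hrpos (fun j => assocV (w j)) (fun j => assocU (w j))
            hu0 pr.2 qr.2 h))
  · intro pr _
    exact (hcomp pr.1 pr.2).isClosed.measurableSet.nullMeasurableSet
  have hvol : ∀ ℓ k : Fin (n+1),
      volume (simplexPiece (fun j => assocU (w j)) (fun j => assocV (w j)) ℓ k)
        = ENNReal.ofReal
          (|Matrix.det (Matrix.of fun (i c : Fin n ⊕ Fin n) =>
            Sum.elim (fun a => assocU (w (ℓ.succAbove a)) i)
              (fun b => assocV (w (k.succAbove b)) i) c)| / ((2 * n).factorial : ℝ)) := by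
    intro ℓ k
    have h := volume_image_myCorner
      (Sum.elim (fun a => assocU (w (ℓ.succAbove a))) (fun b => assocV (w (k.succAbove b))))
    have hmat : (Matrix.of fun (i c : Fin n ⊕ Fin n) =>
        Sum.elim (fun a => assocU (w (ℓ.succAbove a))) (fun b => assocV (w (k.succAbove b))) c i)
        = (Matrix.of fun (i c : Fin n ⊕ Fin n) =>
          Sum.elim (fun a => assocU (w (ℓ.succAbove a)) i)
            (fun b => assocV (w (k.succAbove b)) i) c) := by
      funext i c
      cases c <;> rfl
    have hcard : (Fintype.card (Fin n ⊕ Fin n)) = 2 * n := by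
      simp [two_mul]
    rw [simplexPiece, h, hmat, hcard]
  calc ∑ pr : Fin (n+1) × Fin (n+1),
        volume (simplexPiece (fun j => assocU (w j)) (fun j => assocV (w j)) pr.1 pr.2)
      = ∑ pr : Fin (n+1) × Fin (n+1), ENNReal.ofReal
          (|Matrix.det (Matrix.of fun (i c : Fin n ⊕ Fin n) =>
            Sum.elim (fun a => assocU (w (pr.1.succAbove a)) i)
              (fun b => assocV (w (pr.2.succAbove b)) i) c)| / ((2 * n).factorial : ℝ)) :=
        Finset.sum_congr rfl fun pr _ => hvol pr.1 pr.2
    _ = ENNReal.ofReal (∑ pr : Fin (n+1) × Fin (n+1),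
          |Matrix.det (Matrix.of fun (i c : Fin n ⊕ Fin n) =>
            Sum.elim (fun a => assocU (w (pr.1.succAbove a)) i)
              (fun b => assocV (w (pr.2.succAbove b)) i) c)| / ((2 * n).factorial : ℝ)) :=
        (ENNReal.ofReal_sum_of_nonneg fun pr _ => by positivity).symm
    _ = ENNReal.ofReal ((1 / ((2 * n).factorial : ℝ)) *
          ∑ ℓ : Fin (n + 1), ∑ k : Fin (n + 1),
            |Matrix.det (Matrix.of fun (i c : Fin n ⊕ Fin n) =>
              Sum.elim (fun a => assocU (w (ℓ.succAbove a)) i)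
                (fun b => assocV (w (k.succAbove b)) i) c)|) := by
        congr 1
        rw [Fintype.sum_prod_type]
        simp_rw [div_eq_mul_inv, ← Finset.sum_mul]
        ring
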